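/- Let F be a c.d.f. on ℝ₊ and G a c.d.f. on ℝ₊, and for t, δ ≥ 0 set D(t,δ) = ∫₀ᵗ (Φ(t+δ−s) − Φ(t−s)) ds where Φ(t) = ∫₀ᵗ F(t−u) dG(u). Then Φ(t+δ−s) − Φ(t−s) = ∫_{t−s}^{t+δ−s} F(t+δ−s−u) dG(u) + ∫₀^{t−s} (F(t+δ−s−u) − F(t−s−u)) dG(u), and consequently D(t,δ) ≤ 2δ. -/

import Mathlib

open MeasureTheory Set

/-- Decomposition and bound for increments of `Φ(t) = ∫ F(t-u) dG(u)`: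
`Φ(t+δ-s) - Φ(t-s)` splits into the integral over `(t-s, t+δ-s]` plus the
integral of the increment of `F` over `(-∞, t-s]`, and
`D(t,δ) = ∫₀ᵗ (Φ(t+δ-s) - Φ(t-s)) ds ≤ 2δ`. -/
theorem phi_increment_bound
    (F : ℝ → ℝ) (hFmono : Monotone F) (hF01 : ∀ s, F s ∈ Set.Icc (0:ℝ) 1)
    (hFneg : ∀ s < (0:ℝ), F s = 0)
    (G : StieltjesFunction ℝ) (hGneg : ∀ s ≤ (0:ℝ), G s = 0) (hG1 : ∀ s, G s ≤ 1)
    (t δ : ℝ) (ht : 0 ≤ t) (hδ : 0 ≤ δ) :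
    (∀ s ∈ Set.Icc (0:ℝ) t,
      (∫ u in Set.Iic (t + δ - s), F (t + δ - s - u) ∂G.measure)
          - (∫ u in Set.Iic (t - s), F (t - s - u) ∂G.measure)
        = (∫ u in Set.Ioc (t - s) (t + δ - s), F (t + δ - s - u) ∂G.measure)
          + (∫ u in Set.Iic (t - s),
              (F (t + δ - s - u) - F (t - s - u)) ∂G.measure)) ∧
    (∫ s in (0:ℝ)..t,
      ((∫ u in Set.Iic (t + δ - s), F (t + δ - s - u) ∂G.measure)
        - (∫ u in Set.Iic (t - s), F (t - s - u) ∂G.measure))) ≤ 2 * δ := by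
  have hF0 : ∀ s, 0 ≤ F s := fun s => (hF01 s).1
  have hF1 : ∀ s, F s ≤ 1 := fun s => (hF01 s).2
  have hFmeas : Measurable F := hFmono.measurable
  -- limits of G
  have hGbot : Filter.Tendsto G Filter.atBot (nhds 0) := by
    apply Filter.Tendsto.congr' _ tendsto_const_nhds
    filter_upwards [Filter.eventually_le_atBot (0:ℝ)] with s hs
    exact (hGneg s hs).symm
  have hGbdd : BddAbove (Set.range G) := ⟨1, by rintro x ⟨s, rfl⟩; exact hG1 s⟩
  have hGtop : Filter.Tendsto G Filter.atTop (nhds (⨆ x, G x)) :=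
    tendsto_atTop_ciSup G.mono' hGbdd
  have hL0 : (0:ℝ) ≤ ⨆ x, G x := by
    have := le_ciSup hGbdd (0:ℝ)
    rw [hGneg 0 le_rfl] at this; exact this
  have hL1 : (⨆ x, G x) ≤ 1 := ciSup_le hG1
  have hGuniv : G.measure Set.univ = ENNReal.ofReal (⨆ x, G x) := by
    rw [G.measure_univ hGbot hGtop, sub_zero]
  haveI : IsFiniteMeasure G.measure :=
    ⟨by rw [hGuniv]; exact ENNReal.ofReal_lt_top⟩
  -- integrability of the translated F's
  have hInt : ∀ c : ℝ, Integrable (fun u => F (c - u)) G.measure := by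
    intro c
    refine (integrable_const (1:ℝ)).mono'
      ((hFmeas.comp (measurable_const.sub measurable_id)).aestronglyMeasurable) ?_
    filter_upwards with u
    rw [Real.norm_eq_abs, abs_le]
    exact ⟨by linarith [hF0 (c - u)], hF1 _⟩
  -- the set integral over Iic x equals the full integral
  have hΦ : ∀ x : ℝ, (∫ u in Set.Iic x, F (x - u) ∂G.measure)
      = ∫ u, F (x - u) ∂G.measure := by
    intro x
    apply setIntegral_eq_integral_of_forall_compl_eq_zero
    intro u hu
    simp only [Set.mem_Iic, not_le] at hu
    exact hFneg _ (by linarith)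
  constructor
  · -- decomposition
    intro s hs
    set a := t - s with ha
    set b := t + δ - s with hb
    have hab : a ≤ b := by simp only [ha, hb]; linarith
    have h1 : (∫ u in Set.Iic b, F (b - u) ∂G.measure)
        = (∫ u in Set.Iic a, F (b - u) ∂G.measure)
          + (∫ u in Set.Ioc a b, F (b - u) ∂G.measure) := by
      rw [← setIntegral_union (Set.Iic_disjoint_Ioc le_rfl) measurableSet_Ioc
        (hInt b).integrableOn (hInt b).integrableOn, Set.Iic_union_Ioc_eq_Iic hab]
    have h2 : (∫ u in Set.Iic a, (F (b - u) - F (a - u)) ∂G.measure)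
        = (∫ u in Set.Iic a, F (b - u) ∂G.measure)
          - (∫ u in Set.Iic a, F (a - u) ∂G.measure) :=
      integral_sub (hInt b).integrableOn (hInt a).integrableOn
    linarith
  · -- the bound
    simp only [hΦ]
    have key : ∀ s : ℝ, (∫ u, F (t + δ - s - u) ∂G.measure)
        - (∫ u, F (t - s - u) ∂G.measure)
        = ∫ u, (F (t + δ - s - u) - F (t - s - u)) ∂G.measure :=
      fun s => (integral_sub (hInt _) (hInt _)).symm
    simp only [key]
    rw [intervalIntegral.integral_of_le ht]
    set μ := volume.restrict (Set.Ioc (0:ℝ) t) with hμ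
    haveI : IsFiniteMeasure μ := by
      constructor
      rw [hμ, Measure.restrict_apply_univ]
      exact measure_Ioc_lt_top
    have hH : Integrable
        (Function.uncurry fun s u => F (t + δ - s - u) - F (t - s - u))
        (μ.prod G.measure) := by
      have hm : Measurable (Function.uncurry
          fun s u => F (t + δ - s - u) - F (t - s - u)) := by
        apply Measurable.sub
        · exact hFmeas.comp (((measurable_const.sub measurable_fst)).sub measurable_snd)
        · exact hFmeas.comp (((measurable_const.sub measurable_fst)).sub measurable_snd)
      refine (integrable_const (1:ℝ)).mono' hm.aestronglyMeasurable ?_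
      filter_upwards with p
      rw [Real.norm_eq_abs, abs_le]
      constructor
      · have := hF0 (t + δ - p.1 - p.2); have := hF1 (t - p.1 - p.2)
        simp only [Function.uncurry]; linarith
      · have := hF1 (t + δ - p.1 - p.2); have := hF0 (t - p.1 - p.2)
        simp only [Function.uncurry]; linarith
    rw [show (∫ s in Set.Ioc (0:ℝ) t,
          ∫ u, (F (t + δ - s - u) - F (t - s - u)) ∂G.measure)
        = ∫ s, (∫ u, (F (t + δ - s - u) - F (t - s - u)) ∂G.measure) ∂μ from rfl,
      integral_integral_swap hH]
    have hIF : ∀ a b : ℝ, IntervalIntegrable F volume a b :=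
      fun a b => hFmono.intervalIntegrable
    have inner_le : ∀ u : ℝ,
        (∫ s, (F (t + δ - s - u) - F (t - s - u)) ∂μ) ≤ δ := by
      intro u
      set p := t - u with hp
      have e0 : (∫ s, (F (t + δ - s - u) - F (t - s - u)) ∂μ)
          = ∫ s in (0:ℝ)..t, (F (p + δ - s) - F (p - s)) := by
        rw [intervalIntegral.integral_of_le ht]
        apply setIntegral_congr_fun measurableSet_Ioc
        intro s _
        have e1 : t + δ - s - u = p + δ - s := by rw [hp]; ring
        have e2 : t - s - u = p - s := by rw [hp]; ring
        simp only [e1, e2]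
      rw [e0]
      have hI1 : IntervalIntegrable (fun s => F (p + δ - s)) volume 0 t := by
        apply Antitone.intervalIntegrable
        intro x y hxy
        exact hFmono (by linarith)
      have hI2 : IntervalIntegrable (fun s => F (p - s)) volume 0 t := by
        apply Antitone.intervalIntegrable
        intro x y hxy
        exact hFmono (by linarith)
      rw [intervalIntegral.integral_sub hI1 hI2,
        intervalIntegral.integral_comp_sub_left F (p + δ),
        intervalIntegral.integral_comp_sub_left F p, sub_zero, sub_zero]
      have A1 : (∫ x in (p + δ - t)..(p + δ), F x)
          = (∫ x in (p + δ - t)..p, F x) + ∫ x in p..(p + δ), F x :=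
        (intervalIntegral.integral_add_adjacent_intervals (hIF _ _) (hIF _ _)).symm
      have A2 : (∫ x in (p - t)..p, F x)
          = (∫ x in (p - t)..(p + δ - t), F x) + ∫ x in (p + δ - t)..p, F x :=
        (intervalIntegral.integral_add_adjacent_intervals (hIF _ _) (hIF _ _)).symm
      have B1 : (∫ x in p..(p + δ), F x) ≤ δ := by
        have := intervalIntegral.integral_mono_on (by linarith : p ≤ p + δ)
          (hIF p (p + δ)) intervalIntegrable_const (fun x _ => hF1 x)
        simpa using this
      have B2 : (0:ℝ) ≤ ∫ x in (p - t)..(p + δ - t), F x :=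
        intervalIntegral.integral_nonneg (by linarith) (fun x _ => hF0 x)
      linarith
    calc (∫ u, (∫ s, (F (t + δ - s - u) - F (t - s - u)) ∂μ) ∂G.measure)
        ≤ ∫ _u, δ ∂G.measure := by
          apply integral_mono hH.integral_prod_right (integrable_const δ) inner_le
      _ = (G.measure Set.univ).toReal * δ := by
          rw [integral_const, smul_eq_mul, Measure.real]
      _ ≤ 1 * δ := by
          apply mul_le_mul_of_nonneg_right _ hδ
          rw [hGuniv, ENNReal.toReal_ofReal hL0]
          exact hL1
      _ ≤ 2 * δ := by linarith
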